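/- Let q be an odd prime with q ≡ 1 (mod 5) or q ≡ −1 (mod 5). Then L_{(q−1)/2}² ≡ 2 + 2·(−1)^{(q−1)/2} (mod q²), where L_n is the n-th Lucas number. -/

import Mathlib

/-- The Lucas numbers: `L_0 = 2`, `L_1 = 1`, `L_i = L_{i-1} + L_{i-2}`. -/
def lucasNum : ℕ → ℤ
  | 0 => 2
  | 1 => 1
  | n + 2 => lucasNum (n + 1) + lucasNum n

lemma lucasNum_zero : lucasNum 0 = 2 := rfl
lemma lucasNum_one : lucasNum 1 = 1 := rfl
lemma lucasNum_add_two (n : ℕ) : lucasNum (n + 2) = lucasNum (n + 1) + lucasNum n := rfl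

lemma lucas_eq (n : ℕ) : lucasNum n = 2 * (Nat.fib (n + 1) : ℤ) - Nat.fib n := by
  induction n using Nat.twoStepInduction with
  | zero => simp [lucasNum_zero]
  | one => simp [lucasNum_one]
  | more n ih1 ih2 =>
    rw [lucasNum_add_two, ih1, ih2, Nat.fib_add_two (n := n + 1), Nat.fib_add_two (n := n)]
    push_cast
    ring

lemma fib_cassini (n : ℕ) :
    ((Nat.fib (n + 1) : ℤ)) ^ 2 - Nat.fib (n + 1) * Nat.fib n - (Nat.fib n : ℤ) ^ 2
      = (-1 : ℤ) ^ n := by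
  induction n with
  | zero => simp
  | succ n ih =>
    rw [Nat.fib_add_two (n := n)]
    push_cast
    push_cast at ih
    rw [pow_succ]
    linear_combination (-1 : ℤ) * ih

lemma lucas_sq (n : ℕ) :
    lucasNum n ^ 2 = 5 * (Nat.fib n : ℤ) ^ 2 + 4 * (-1 : ℤ) ^ n := by
  rw [lucas_eq]
  linear_combination 4 * fib_cassini n

lemma fib_two_mul_int (n : ℕ) :
    ((Nat.fib (2 * n) : ℤ)) = (Nat.fib n : ℤ) * lucasNum n := by
  have hle : Nat.fib n ≤ 2 * Nat.fib (n + 1) := by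
    have := Nat.fib_le_fib_succ (n := n)
    omega
  rw [Nat.fib_two_mul]
  push_cast [hle]
  rw [lucas_eq]

lemma isSquare_neg_one_zmod5 : IsSquare (-1 : ZMod 5) := ⟨2, by decide⟩

/-- **(20).** If `q` is an odd prime with `q ≡ ±1 (mod 5)`, then
`L_{(q-1)/2}² ≡ 2 + 2·(-1)^{(q-1)/2} (mod q²)`. -/
theorem lucasNum_half_sq_congr (q : ℕ) (hq : q.Prime) (hodd : Odd q)
    (h5 : (q : ℤ) ≡ 1 [ZMOD 5] ∨ (q : ℤ) ≡ -1 [ZMOD 5]) :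
    lucasNum ((q - 1) / 2) ^ 2 ≡ 2 + 2 * (-1 : ℤ) ^ ((q - 1) / 2)
      [ZMOD (q : ℤ) ^ 2] := by
  haveI : Fact q.Prime := ⟨hq⟩
  haveI : Fact (Nat.Prime 5) := ⟨by norm_num⟩
  have hq2 : q ≠ 2 := by rintro rfl; exact (Nat.not_odd_iff_even.mpr (by norm_num)) hodd
  have hq5 : q ≠ 5 := by
    rintro rfl
    rcases h5 with h | h <;> revert h <;> decide
  set n := (q - 1) / 2 with hn
  have h2n : 2 * n = q - 1 := by
    obtain ⟨m, hm⟩ := hodd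
    omega
  -- 5 is a square mod q
  have hsq5 : IsSquare ((5 : ℕ) : ZMod q) := by
    rw [← ZMod.exists_sq_eq_prime_iff_of_mod_four_eq_one (by norm_num) hq2]
    rcases h5 with h | h
    · have : ((q : ℤ) : ZMod 5) = ((1 : ℤ) : ZMod 5) := (ZMod.intCast_eq_intCast_iff _ _ _).mpr h
      push_cast at this
      rw [this]; exact ⟨1, by norm_num⟩
    · have : ((q : ℤ) : ZMod 5) = ((-1 : ℤ) : ZMod 5) := (ZMod.intCast_eq_intCast_iff _ _ _).mpr h
      push_cast at this
      rw [this]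
      exact isSquare_neg_one_zmod5
  obtain ⟨α, hα⟩ := hsq5
  have hα' : α * α = 5 := by rw [← hα]; push_cast; ring
  have h2 : (2 : ZMod q) ≠ 0 := by
    intro h
    have hdvd : q ∣ 2 := (ZMod.natCast_eq_zero_iff 2 q).mp (by exact_mod_cast h)
    exact hq2 ((Nat.prime_dvd_prime_iff_eq hq Nat.prime_two).mp hdvd)
  have h5ne : (5 : ZMod q) ≠ 0 := by
    intro h
    have hdvd : q ∣ 5 := (ZMod.natCast_eq_zero_iff 5 q).mp (by exact_mod_cast h)
    exact hq5 ((Nat.prime_dvd_prime_iff_eq hq (by norm_num)).mp hdvd)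
  have hαne : α ≠ 0 := by
    intro h; rw [h, mul_zero] at hα'; exact h5ne hα'.symm
  set φ : ZMod q := (1 + α) * (2 : ZMod q)⁻¹ with hφdef
  set ψ : ZMod q := (1 - α) * (2 : ZMod q)⁻¹ with hψdef
  have hinv : (2 : ZMod q) * (2 : ZMod q)⁻¹ = 1 := mul_inv_cancel₀ h2
  have hφsq : φ ^ 2 = φ + 1 := by
    rw [hφdef]; field_simp; linear_combination hα'
  have hψsq : ψ ^ 2 = ψ + 1 := by
    rw [hψdef]; field_simp; linear_combination hα'
  have hmul : φ * ψ = -1 := by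
    rw [hφdef, hψdef]; field_simp; linear_combination -hα'
  have hφne : φ ≠ 0 := by
    intro h; rw [h, zero_mul] at hmul
    exact h2 (by linear_combination 2 * hmul)
  have hψne : ψ ≠ 0 := by
    intro h; rw [h, mul_zero] at hmul
    exact h2 (by linear_combination 2 * hmul)
  -- Binet formulas mod q
  have binet : ∀ k : ℕ, (((lucasNum k : ℤ) : ZMod q) = φ ^ k + ψ ^ k) ∧
      (((Nat.fib k : ℕ) : ZMod q) * α = φ ^ k - ψ ^ k) := by
    intro k
    induction k using Nat.twoStepInduction with
    | zero =>
      refine ⟨?_, by simp⟩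
      rw [lucasNum_zero]
      push_cast
      ring
    | one =>
      constructor
      · rw [lucasNum_one, hφdef, hψdef]
        push_cast
        linear_combination -hinv
      · rw [Nat.fib_one, hφdef, hψdef]
        push_cast
        linear_combination (-α) * hinv
    | more k ih1 ih2 =>
      have hφ3 : φ ^ (k + 2) = φ ^ (k + 1) + φ ^ k := by
        calc φ ^ (k + 2) = φ ^ k * φ ^ 2 := by ring
        _ = φ ^ k * (φ + 1) := by rw [hφsq]
        _ = φ ^ (k + 1) + φ ^ k := by ring
      have hψ3 : ψ ^ (k + 2) = ψ ^ (k + 1) + ψ ^ k := by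
        calc ψ ^ (k + 2) = ψ ^ k * ψ ^ 2 := by ring
        _ = ψ ^ k * (ψ + 1) := by rw [hψsq]
        _ = ψ ^ (k + 1) + ψ ^ k := by ring
      constructor
      · rw [lucasNum_add_two, hφ3, hψ3]
        push_cast
        rw [ih1.1, ih2.1]; ring
      · rw [Nat.fib_add_two, hφ3, hψ3]
        push_cast
        push_cast at ih1 ih2
        linear_combination ih1.2 + ih2.2
  -- Fermat
  have hφpow : φ ^ (2 * n) = 1 := by rw [h2n]; exact ZMod.pow_card_sub_one_eq_one hφne
  have hψpow : ψ ^ (2 * n) = 1 := by rw [h2n]; exact ZMod.pow_card_sub_one_eq_one hψne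
  -- fib n * lucas n ≡ 0 mod q
  have hfibL : ((Nat.fib n : ℕ) : ZMod q) * ((lucasNum n : ℤ) : ZMod q) = 0 := by
    have h1 : (((Nat.fib (2 * n) : ℕ)) : ZMod q) * α = 0 := by
      rw [(binet (2 * n)).2, hφpow, hψpow, sub_self]
    have h2' : (((Nat.fib (2 * n) : ℕ)) : ZMod q) = 0 := by
      rcases mul_eq_zero.mp h1 with h | h
      · exact h
      · exact absurd h hαne
    have hcast : (((Nat.fib (2 * n) : ℕ)) : ZMod q)
        = ((Nat.fib n : ℕ) : ZMod q) * ((lucasNum n : ℤ) : ZMod q) := by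
      have := fib_two_mul_int n
      calc (((Nat.fib (2 * n) : ℕ)) : ZMod q) = (((Nat.fib (2 * n) : ℤ)) : ZMod q) := by
            push_cast; ring
      _ = (((Nat.fib n : ℤ) * lucasNum n : ℤ) : ZMod q) := by rw [this]
      _ = _ := by push_cast; ring
    rw [← hcast]; exact h2'
  rcases mul_eq_zero.mp hfibL with hF | hL
  · -- q ∣ fib n ; n is even
    have hφψ : φ ^ n = ψ ^ n := by
      have h := (binet n).2
      rw [hF, zero_mul] at h
      linear_combination -h
    have hpar : (-1 : ZMod q) ^ n = 1 := by
      calc (-1 : ZMod q) ^ n = (φ * ψ) ^ n := by rw [hmul]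
      _ = φ ^ n * ψ ^ n := mul_pow _ _ _
      _ = φ ^ n * φ ^ n := by rw [hφψ]
      _ = φ ^ (2 * n) := by rw [← pow_add, two_mul]
      _ = 1 := hφpow
    have heven : Even n := by
      rcases Nat.even_or_odd n with he | ho
      · exact he
      · exfalso
        rw [ho.neg_one_pow] at hpar
        exact h2 (by linear_combination -hpar)
    have hdvdN : q ∣ Nat.fib n := (ZMod.natCast_eq_zero_iff _ _).mp hF
    obtain ⟨c, hc⟩ := hdvdN
    refine Int.modEq_iff_dvd.mpr ⟨-5 * (c : ℤ) ^ 2, ?_⟩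
    rw [lucas_sq n, heven.neg_one_pow, hc]
    push_cast
    ring
  · -- q ∣ lucas n ; n is odd
    have hφψ : φ ^ n = -ψ ^ n := by
      have h := (binet n).1
      rw [hL] at h
      linear_combination -h
    have hpar : (-1 : ZMod q) ^ n = -1 := by
      calc (-1 : ZMod q) ^ n = (φ * ψ) ^ n := by rw [hmul]
      _ = φ ^ n * ψ ^ n := mul_pow _ _ _
      _ = -(ψ ^ n * ψ ^ n) := by rw [hφψ]; ring
      _ = -(ψ ^ (2 * n)) := by rw [← pow_add, two_mul]
      _ = -1 := by rw [hψpow]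
    have hno : Odd n := by
      rcases Nat.even_or_odd n with he | ho
      · exfalso
        rw [he.neg_one_pow] at hpar
        exact h2 (by linear_combination hpar)
      · exact ho
    have hdvdL : (q : ℤ) ∣ lucasNum n := (ZMod.intCast_zmod_eq_zero_iff_dvd _ _).mp hL
    obtain ⟨c, hc⟩ := hdvdL
    refine Int.modEq_iff_dvd.mpr ⟨-(c ^ 2), ?_⟩
    rw [hno.neg_one_pow, hc]
    ring
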